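/- Let D be a partial order with narrowing operator △ (b ⊑ a implies b ⊑ a △ b ⊑ a). Suppose all right-hand sides f_x : (X → D) → D of a system of equations are monotone (with respect to the pointwise order on X → D), and ρ₀ is a post-solution, i.e., f_x ρ₀ ⊑ ρ₀ x for all x. Then any chaotic iteration sequence ρ₀, ρ₁, ... in which each step updates a single unknown x by ρ_{i+1} x = ρ_i x △ f_x ρ_i (leaving other unknowns unchanged) is pointwise decreasing (ρ_{i+1} ⊑ ρ_i for all i), and moreover every ρ_i in the sequence is again a post-solution. -/
import Mathlib

theorem stmt1 {D X : Type*} [PartialOrder D]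
    (nar : D → D → D)
    (hn : ∀ a b : D, b ≤ a → b ≤ nar a b ∧ nar a b ≤ a)
    (f : X → (X → D) → D)
    (hmono : ∀ x, Monotone (f x))
    (ρ : ℕ → X → D)
    (hpost : ∀ x, f x (ρ 0) ≤ ρ 0 x)
    (hstep : ∀ i, ∃ x, ρ (i+1) x = nar (ρ i x) (f x (ρ i)) ∧
      ∀ y, y ≠ x → ρ (i+1) y = ρ i y) :
    ∀ i, (∀ y, ρ (i+1) y ≤ ρ i y) ∧ (∀ x, f x (ρ i) ≤ ρ i x) := by
  have key : ∀ i, (∀ x, f x (ρ i) ≤ ρ i x) := by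
    intro i
    induction i with
    | zero => exact hpost
    | succ i ih =>
      obtain ⟨x, hx, hy⟩ := hstep i
      have hdec : ∀ y, ρ (i+1) y ≤ ρ i y := by
        intro y
        by_cases h : y = x
        · subst h; rw [hx]; exact (hn _ _ (ih y)).2
        · rw [hy y h]
      intro z
      by_cases h : z = x
      · subst h
        rw [hx]
        exact le_trans (hmono z hdec) (hn _ _ (ih z)).1
      · rw [hy z h]
        exact le_trans (hmono z hdec) (ih z)
  intro i
  refine ⟨?_, key i⟩
  obtain ⟨x, hx, hy⟩ := hstep i
  intro y
  by_cases h : y = x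
  · subst h; rw [hx]; exact (hn _ _ (key i y)).2
  · rw [hy y h]
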